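/- Over the alphabet Σ = {a, b, $, %}, let L₁ = ba⁺ba⁺$ and L₂ = ba⁺ba⁺%$. Then (L₁ ←min-sdi L₂) ∩ (ba⁺)²%$ = { b a^m b a^n %$ : n > m ≥ 1 }. -/

import Mathlib

/-- Site-directed insertion (SDI) of string `y` into string `x`. -/
def sdiStr {α : Type} (x y : List α) : Set (List α) :=
  { w | ∃ x₁ u z v x₂ : List α,
      x = x₁ ++ u ++ v ++ x₂ ∧ y = u ++ z ++ v ∧ u ≠ [] ∧ v ≠ [] ∧
      w = x₁ ++ u ++ z ++ v ++ x₂ }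

/-- Site-directed insertion extended to languages. -/
def sdiLang {α : Type} (L₁ L₂ : Set (List α)) : Set (List α) :=
  { w | ∃ x ∈ L₁, ∃ y ∈ L₂, w ∈ sdiStr x y }

/-- Alphabetic site-directed insertion of string `y` into string `x`. -/
def asdiStr {α : Type} (x y : List α) : Set (List α) :=
  { w | ∃ (x₁ x₂ z : List α) (a b : α),
      x = x₁ ++ [a] ++ [b] ++ x₂ ∧ y = [a] ++ z ++ [b] ∧
      w = x₁ ++ [a] ++ z ++ [b] ++ x₂ }

/-- Alphabetic site-directed insertion extended to languages. -/
def asdiLang {α : Type} (L₁ L₂ : Set (List α)) : Set (List α) :=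
  { w | ∃ x ∈ L₁, ∃ y ∈ L₂, w ∈ asdiStr x y }

/-- Maximal site-directed insertion of string `y` into string `x`. -/
def maxSdiStr {α : Type} (x y : List α) : Set (List α) :=
  { w | ∃ x₁ u z v x₂ : List α,
      x = x₁ ++ u ++ v ++ x₂ ∧ y = u ++ z ++ v ∧ u ≠ [] ∧ v ≠ [] ∧
      w = x₁ ++ u ++ z ++ v ++ x₂ ∧
      ¬ ∃ x₁' x₂' z' : List α, x₁' <:+ x₁ ∧ x₂' <+: x₂ ∧
          x₁' ++ x₂' ≠ [] ∧ y = x₁' ++ u ++ z' ++ v ++ x₂' }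

/-- Maximal site-directed insertion extended to languages. -/
def maxSdiLang {α : Type} (L₁ L₂ : Set (List α)) : Set (List α) :=
  { w | ∃ x ∈ L₁, ∃ y ∈ L₂, w ∈ maxSdiStr x y }

/-- Minimal site-directed insertion of string `y` into string `x`:
the words `u` and `v` of the matched outfix must be unbordered. -/
def minSdiStr {α : Type} (x y : List α) : Set (List α) :=
  { w | ∃ x₁ u z v x₂ : List α,
      x = x₁ ++ u ++ v ++ x₂ ∧ y = u ++ z ++ v ∧ u ≠ [] ∧ v ≠ [] ∧
      w = x₁ ++ u ++ z ++ v ++ x₂ ∧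
      (∀ s : List α, s <:+ u → s ≠ [] → s ≠ u → ¬ s <+: u) ∧
      (∀ p : List α, p <+: v → p ≠ [] → p ≠ v → ¬ p <:+ v) }

/-- Minimal site-directed insertion extended to languages. -/
def minSdiLang {α : Type} (L₁ L₂ : Set (List α)) : Set (List α) :=
  { w | ∃ x ∈ L₁, ∃ y ∈ L₂, w ∈ minSdiStr x y }

/-- The four-letter alphabet Σ = {a, b, $, %}. -/
inductive Sym4 : Type
  | a : Sym4
  | b : Sym4
  | dollar : Sym4
  | percent : Sym4
  deriving DecidableEq

instance instFintypeSym4 : Fintype Sym4 :=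
  ⟨{Sym4.a, Sym4.b, Sym4.dollar, Sym4.percent}, fun x => by cases x <;> simp⟩

namespace MinSdiAux
open Sym4

lemma rep_b_inj : ∀ (i m : ℕ) (l₁ l₂ : List Sym4),
    List.replicate i a ++ b :: l₁ = List.replicate m a ++ b :: l₂ → i = m ∧ l₁ = l₂ := by
  intro i
  induction i with
  | zero =>
    intro m l₁ l₂ h
    cases m with
    | zero => simpa using h
    | succ k => simp [List.replicate_succ] at h
  | succ k ih =>
    intro m l₁ l₂ h
    cases m with
    | zero => simp [List.replicate_succ] at h
    | succ m' =>
      simp only [List.replicate_succ, List.cons_append, List.cons.injEq, true_and] at h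
      obtain ⟨hm, hl⟩ := ih m' l₁ l₂ h
      exact ⟨by omega, hl⟩

lemma rep_le (c : Sym4) (hc : c ≠ a) : ∀ (j n : ℕ) (z l : List Sym4),
    List.replicate j a ++ z = List.replicate n a ++ c :: l → j ≤ n := by
  intro j
  induction j with
  | zero => intro n z l _; omega
  | succ k ih =>
    intro n z l h
    cases n with
    | zero =>
      simp only [List.replicate_succ, List.cons_append, List.replicate_zero,
        List.nil_append, List.cons.injEq] at h
      exact absurd h.1.symm hc
    | succ n' =>
      simp only [List.replicate_succ, List.cons_append, List.cons.injEq, true_and] at h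
      exact Nat.succ_le_succ (ih n' z l h)

lemma all_a {l r : List Sym4} {m n : ℕ}
    (h : l ++ r = List.replicate m a ++ b :: List.replicate n a)
    (hb : List.count b l = 0) : l = List.replicate l.length a := by
  refine List.eq_replicate_iff.mpr ⟨rfl, fun x hx => ?_⟩
  have hxm : x ∈ List.replicate m a ++ b :: List.replicate n a := by
    rw [← h]; exact List.mem_append_left _ hx
  have hxb : x ≠ b := by
    intro rfl'
    subst rfl'
    exact absurd (List.count_eq_zero.mp hb) (fun h' => h' hx)
  rcases List.mem_append.mp hxm with h1 | h1
  · exact List.eq_of_mem_replicate h1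
  · rcases List.mem_cons.mp h1 with h2 | h2
    · exact absurd h2 hxb
    · exact List.eq_of_mem_replicate h2

lemma u_unbordered (m n : ℕ) (hmn : m < n) :
    ∀ s : List Sym4, s <:+ ([b] ++ List.replicate m a ++ [b] ++ List.replicate n a) →
      s ≠ [] → s ≠ [b] ++ List.replicate m a ++ [b] ++ List.replicate n a →
      ¬ s <+: ([b] ++ List.replicate m a ++ [b] ++ List.replicate n a) := by
  intro s hsuf hne hnequ hpre
  obtain ⟨t, ht⟩ := hsuf
  obtain ⟨r, hr⟩ := hpre
  simp only [List.cons_append, List.nil_append, List.append_assoc] at ht hr hnequ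
  obtain ⟨s', rfl⟩ : ∃ s', s = b :: s' := by
    cases s with
    | nil => exact absurd rfl hne
    | cons c s' =>
      simp only [List.cons_append, List.cons.injEq] at hr
      exact ⟨s', by rw [hr.1]⟩
  obtain ⟨t', rfl⟩ : ∃ t', t = b :: t' := by
    cases t with
    | nil => exact absurd (by simpa using ht) hnequ
    | cons c t' =>
      simp only [List.cons_append, List.cons.injEq] at ht
      exact ⟨t', by rw [ht.1]⟩
  have hct : List.count b t' = 0 ∧ List.count b s' = 0 := by
    have h1 := congrArg (List.count b) ht
    have h2 := congrArg (List.count b) hr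
    simp [List.count_append, List.count_replicate, List.count_cons] at h1 h2
    omega
  simp only [List.cons_append, List.cons.injEq, true_and] at ht hr
  have hs' : s' = List.replicate s'.length a := all_a hr hct.2
  have ht' : t' = List.replicate t'.length a := all_a ht hct.1
  rw [hs'] at hr ht
  rw [ht'] at ht
  have h1 : s'.length ≤ m := rep_le b (by simp) _ _ _ _ hr
  have h2 := rep_b_inj _ _ _ _ ht
  have h3 := congrArg List.length h2.2
  simp at h3
  omega

end MinSdiAux

open Sym4 in
/-- With `L₁ = ba⁺ba⁺$` and `L₂ = ba⁺ba⁺%$`,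
`(L₁ ←min-sdi L₂) ∩ (ba⁺)²%$ = { ba^m ba^n %$ : n > m ≥ 1 }`. -/
theorem minSdi_intersection :
    minSdiLang
        { w | ∃ i j : ℕ, 1 ≤ i ∧ 1 ≤ j ∧
            w = [b] ++ List.replicate i a ++ [b] ++ List.replicate j a ++ [dollar] }
        { w | ∃ i j : ℕ, 1 ≤ i ∧ 1 ≤ j ∧
            w = [b] ++ List.replicate i a ++ [b] ++ List.replicate j a ++ [percent, dollar] }
      ∩ { w | ∃ i j : ℕ, 1 ≤ i ∧ 1 ≤ j ∧
            w = [b] ++ List.replicate i a ++ [b] ++ List.replicate j a ++ [percent, dollar] } =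
    { w | ∃ m n : ℕ, 1 ≤ m ∧ m < n ∧
        w = [b] ++ List.replicate m a ++ [b] ++ List.replicate n a ++ [percent, dollar] } := by
  ext w
  simp only [Set.mem_inter_iff, Set.mem_setOf_eq, minSdiLang, minSdiStr]
  constructor
  · rintro ⟨⟨x, ⟨i, j, hi, hj, rfl⟩, y, ⟨k, l, hk, hl, rfl⟩,
      x₁, u, z, v, x₂, hxd, hyd, hu, hv, hwd, hubd, _⟩, ⟨m, n, hm, hn, rfl⟩⟩
    refine ⟨m, n, hm, ?_, rfl⟩
    -- counts
    have e1 := congrArg (List.count dollar) hwd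
    have e2 := congrArg (List.count dollar) hyd
    have e3 := congrArg (List.count dollar) hxd
    have f1 := congrArg (List.count b) hwd
    have f2 := congrArg (List.count b) hyd
    have g3 := congrArg (List.count percent) hxd
    simp [List.count_append, List.count_replicate, List.count_cons] at e1 e2 e3 f1 f2 g3
    -- x₂ = []
    obtain rfl : x₂ = [] := by
      rcases x₂.eq_nil_or_concat with rfl | ⟨x₂', c, rfl⟩
      · rfl
      · exfalso
        have hrev := congrArg List.reverse hxd
        simp [List.reverse_append] at hrev
        obtain ⟨rfl, -⟩ := hrev
        simp [List.count_append] at e1 e2 e3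
        omega
    -- x₁ = []
    obtain rfl : x₁ = [] := by
      cases x₁ with
      | nil => rfl
      | cons c x₁' =>
        exfalso
        simp only [List.cons_append, List.nil_append, List.append_assoc,
          List.cons.injEq] at hxd
        obtain ⟨rfl, -⟩ := hxd
        simp [List.count_cons] at f1 f2
        omega
    simp only [List.nil_append, List.append_nil] at hxd hwd
    simp only [List.count_nil] at e1 e2 e3 f1 f2 g3
    -- v = [dollar]
    have hpv : List.count percent v = 0 := by omega
    obtain rfl : v = [dollar] := by
      have hsv : v <:+ ([b] ++ List.replicate m a ++ [b] ++ List.replicate n a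
          ++ [percent, dollar]) := ⟨u ++ z, by rw [← hwd]⟩
      have hs2 : [percent, dollar] <:+ ([b] ++ List.replicate m a ++ [b]
          ++ List.replicate n a ++ [percent, dollar]) := ⟨_, rfl⟩
      rcases List.suffix_or_suffix_of_suffix hsv hs2 with h | h
      · obtain ⟨t, ht⟩ := h
        rcases t with _ | ⟨c, _ | ⟨c', t'⟩⟩
        · exfalso
          have hv2 : v = [percent, dollar] := by simpa using ht
          have hmem : percent ∈ v := by rw [hv2]; simp
          exact (List.count_eq_zero.mp hpv) hmem
        · simp only [List.cons_append, List.nil_append, List.cons.injEq] at ht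
          exact ht.2
        · exfalso
          simp only [List.cons_append, List.cons.injEq] at ht
          exact hv (List.append_eq_nil_iff.mp ht.2.2).2
      · exfalso
        obtain ⟨t, ht⟩ := h
        have hmem : percent ∈ v := by rw [← ht]; simp
        exact (List.count_eq_zero.mp hpv) hmem
    -- u = b a^i b a^j
    have hud : u = [b] ++ List.replicate i a ++ [b] ++ List.replicate j a := by
      have : ([b] ++ List.replicate i a ++ [b] ++ List.replicate j a) ++ [dollar]
          = u ++ [dollar] := by rw [← hxd]
      exact ((List.append_left_inj _).mp this).symm
    -- u ++ z = b a^m b a^n %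
    have huz : u ++ z = [b] ++ List.replicate m a ++ [b] ++ List.replicate n a
        ++ [percent] := by
      have : (u ++ z) ++ [dollar] = ([b] ++ List.replicate m a ++ [b]
          ++ List.replicate n a ++ [percent]) ++ [dollar] := by
        rw [← hwd]; simp
      exact (List.append_left_inj _).mp this
    rw [hud] at huz
    simp only [List.singleton_append, List.cons_append, List.nil_append,
      List.append_assoc, List.cons.injEq, true_and] at huz
    obtain ⟨him, huz2⟩ := MinSdiAux.rep_b_inj _ _ _ _ huz
    have hjn : j ≤ n := MinSdiAux.rep_le percent (by simp) _ _ _ _ huz2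
    -- unborderedness forces i < j
    have hij : i < j := by
      by_contra hc
      push_neg at hc
      refine hubd ([b] ++ List.replicate j a) ?_ (by simp) ?_ ?_
      · exact ⟨[b] ++ List.replicate i a, by rw [hud]; simp⟩
      · rw [hud]
        intro h
        have := congrArg List.length h
        simp at this
        omega
      · refine ⟨List.replicate (i - j) a ++ [b] ++ List.replicate j a, ?_⟩
        rw [hud]
        simp only [List.cons_append, List.nil_append, List.append_assoc,
          List.cons.injEq, true_and]
        rw [← List.append_assoc, ← List.replicate_add]
        congr 2
        omega
    omega
  · rintro ⟨m, n, hm, hmn, rfl⟩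
    have hn : 1 ≤ n := by omega
    refine ⟨⟨[b] ++ List.replicate m a ++ [b] ++ List.replicate n a ++ [dollar],
      ⟨m, n, hm, hn, rfl⟩,
      [b] ++ List.replicate m a ++ [b] ++ List.replicate n a ++ [percent, dollar],
      ⟨m, n, hm, hn, rfl⟩,
      [], [b] ++ List.replicate m a ++ [b] ++ List.replicate n a, [percent], [dollar], [],
      by simp, by simp, by simp, by simp, by simp,
      MinSdiAux.u_unbordered m n hmn, ?_⟩, ⟨m, n, hm, hn, rfl⟩⟩
    intro p hp hne hnv
    exfalso
    obtain ⟨r, hr⟩ := hp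
    cases p with
    | nil => exact hne rfl
    | cons c p' =>
      simp only [List.cons_append, List.cons.injEq] at hr
      obtain ⟨rfl, hr2⟩ := hr
      exact hnv (by rw [(List.append_eq_nil_iff.mp hr2).1])
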